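/- For p = 5, s = 1: for every integer n ≥ 1 and every integer b with 0 ≤ b < 5(n+1) and 5 | b, one has M_{5,1,n}(b) > 0. -/

import Mathlib

open Polynomial Finset

/-- The polynomial `T_{p,s,n}(q) = ∏_{j=0}^n ∏_{k=1}^{p-1} (1 - q^{pj+k})^s`. -/
noncomputable def borweinPoly (p s n : ℕ) : Polynomial ℤ :=
  ∏ j ∈ Finset.range (n + 1), ∏ k ∈ Finset.Icc 1 (p - 1),
    (1 - Polynomial.X ^ (p * j + k)) ^ s

/-- The coefficient `t_{i,p,s}` of `q^i` in `T_{p,s,n}(q)`. -/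
noncomputable def borweinCoeff (p s n i : ℕ) : ℤ := (borweinPoly p s n).coeff i

/-- The degree `d_{p,s,n} = p(p-1)s(n+1)^2/2` of `T_{p,s,n}`. -/
def borweinDeg (p s n : ℕ) : ℕ := p * (p - 1) * s * (n + 1) ^ 2 / 2

/-- `M_{p,s,n}(b) = ∑_{ℓ ≥ 0} t_{b + ℓ·p(n+1), p, s}`, a finite sum since the
coefficients vanish beyond the degree `d_{p,s,n}`. -/
noncomputable def borweinM (p s n b : ℕ) : ℤ :=
  ∑ l ∈ Finset.range (borweinDeg p s n + 1), borweinCoeff p s n (b + l * (p * (n + 1)))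

lemma five_mul_le_pow : ∀ k : ℕ, 1 ≤ k → 5 * k ≤ 5 ^ k := by
  intro k hk
  induction k with
  | zero => omega
  | succ j ih =>
    rcases Nat.eq_zero_or_pos j with rfl | hj
    · simp
    · have h1 := ih hj
      have h2 : 5 ^ (j + 1) = 5 * 5 ^ j := by rw [pow_succ]; ring
      have h3 : 5 ≤ 5 ^ j := by
        calc 5 = 5 ^ 1 := by norm_num
        _ ≤ 5 ^ j := Nat.pow_le_pow_right (by norm_num) hj
      omega

lemma nat_ineq (m : ℕ) (hm : 2 ≤ m) : 5 * m * 5 ^ (m / 2) < 4 * 5 ^ m := by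
  have hk : m / 2 + (m - m / 2) = m := by omega
  set k := m - m / 2 with hkdef
  have hk1 : 1 ≤ k := by omega
  have h2k : m ≤ 2 * k := by omega
  have h5k := five_mul_le_pow k hk1
  have hpos : 0 < 5 ^ k := pow_pos (by norm_num : (0:ℕ) < 5) k
  have h1 : 5 * m < 4 * 5 ^ k := by omega
  calc 5 * m * 5 ^ (m / 2) < 4 * 5 ^ k * 5 ^ (m / 2) :=
        (Nat.mul_lt_mul_right (pow_pos (by norm_num : (0:ℕ) < 5) _)).mpr h1
  _ = 4 * 5 ^ (k + m / 2) := by rw [pow_add]; ring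
  _ = 4 * 5 ^ m := by rw [show k + m / 2 = m by omega]

lemma abs_eq_one_of_pow {z : ℂ} {N : ℕ} (hN : 0 < N) (h : z ^ N = 1) : ‖z‖ = 1 := by
  have h1 : ‖z‖ ^ N = 1 := by
    rw [← norm_pow, h, norm_one]
  have h0 : 0 ≤ ‖z‖ := norm_nonneg z
  rcases lt_trichotomy ‖z‖ 1 with hlt | heq | hgt
  · exfalso
    have : ‖z‖ ^ N < 1 := pow_lt_one₀ h0 hlt (by omega)
    linarith
  · exact heq
  · exfalso
    have : 1 < ‖z‖ ^ N := one_lt_pow₀ hgt (by omega)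
    linarith

lemma bp_prod_form (n : ℕ) :
    borweinPoly 5 1 n =
      ∏ x ∈ (Finset.range (5 * (n + 1))).filter (fun x => ¬ (5 ∣ x)), (1 - X ^ x) := by
  unfold borweinPoly
  simp only [pow_one, show (5:ℕ) - 1 = 4 from rfl]
  rw [← Finset.prod_product']
  refine Finset.prod_bij' (fun (p : ℕ × ℕ) (_ : p ∈ Finset.range (n+1) ×ˢ Finset.Icc 1 4) => 5 * p.1 + p.2)
    (fun x _ => (x / 5, x % 5)) ?_ ?_ ?_ ?_ ?_
  · rintro ⟨j, k⟩ hp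
    simp only [Finset.mem_product, Finset.mem_range, Finset.mem_Icc] at hp
    simp only [Finset.mem_filter, Finset.mem_range]
    omega
  · intro x hx
    simp only [Finset.mem_filter, Finset.mem_range] at hx
    simp only [Finset.mem_product, Finset.mem_range, Finset.mem_Icc]
    omega
  · rintro ⟨j, k⟩ hp
    simp only [Finset.mem_product, Finset.mem_range, Finset.mem_Icc] at hp
    have h1 : (5 * j + k) / 5 = j := by omega
    have h2 : (5 * j + k) % 5 = k := by omega
    simp [h1, h2]
  · intro x hx
    simp only [Finset.mem_filter, Finset.mem_range] at hx
    simp only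
    omega
  · rintro ⟨j, k⟩ hp
    rfl

lemma bp_natDegree_le (n : ℕ) : (borweinPoly 5 1 n).natDegree ≤ borweinDeg 5 1 n := by
  have h1 : (borweinPoly 5 1 n).natDegree ≤
      ∑ j ∈ Finset.range (n + 1), ∑ k ∈ Finset.Icc 1 4, (5 * j + k) := by
    unfold borweinPoly
    refine le_trans (Polynomial.natDegree_prod_le _ _) ?_
    apply Finset.sum_le_sum
    intro j _
    refine le_trans (Polynomial.natDegree_prod_le _ _) ?_
    apply Finset.sum_le_sum
    intro k _
    simp only [pow_one, show (5:ℕ) - 1 = 4 from rfl]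
    refine le_trans (Polynomial.natDegree_sub_le _ _) ?_
    simp
  have h2 : ∀ j : ℕ, ∑ k ∈ Finset.Icc 1 4, (5 * j + k) = 20 * j + 10 := by
    intro j
    show ∑ k ∈ ({1,2,3,4} : Finset ℕ), (5 * j + k) = 20 * j + 10
    simp [Finset.sum_insert]
    ring
  rw [Finset.sum_congr rfl (fun j _ => h2 j)] at h1
  rw [Finset.sum_add_distrib, ← Finset.mul_sum, Finset.sum_const, Finset.card_range,
    smul_eq_mul] at h1
  have h3 := Finset.sum_range_id_mul_two (n + 1)
  rw [Nat.add_sub_cancel] at h3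
  have h4 : borweinDeg 5 1 n = 10 * ((n+1) * (n+1)) := by
    unfold borweinDeg
    rw [pow_two]
    generalize (n+1) * (n+1) = K
    omega
  have h5 : (n+1) * (n+1) = (n+1) * n + (n+1) := by ring
  rw [h4, h5]
  generalize hS : ∑ i ∈ Finset.range (n+1), i = S at h1 h3
  generalize (n+1) * n = A at h3 ⊢
  omega

lemma prod_not_dvd_eq_five {h h' : ℕ} (hh : h = 5 * h') (hh' : 0 < h') {β : ℂ}
    (hβ : IsPrimitiveRoot β h) :
    ∏ r ∈ (Finset.range h).filter (fun r => ¬ (5 ∣ r)), (1 - β ^ r) = 5 := by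
  have hhpos : 0 < h := by omega
  -- full product over 1 ≤ r < h
  have hfull : ∏ r ∈ (Finset.range h).filter (fun r => r ≠ 0), (1 - β ^ r) = (h : ℂ) := by
    have h1 : IsPrimitiveRoot β ((h - 1) + 1) := by rwa [Nat.sub_add_cancel hhpos]
    have h2 := IsPrimitiveRoot.prod_one_sub_pow_eq_order h1
    have h3 : (Finset.range h).filter (fun r => r ≠ 0) = (Finset.Ico 1 h) := by
      ext x; simp [Finset.mem_filter, Finset.mem_range, Finset.mem_Ico]; omega
    rw [h3, Finset.prod_Ico_eq_prod_range]
    have h4 : ∀ i ∈ Finset.range (h - 1), (1 - β ^ (1 + i)) = (1 - β ^ (i + 1)) := by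
      intro i _; rw [add_comm]
    rw [Finset.prod_congr rfl h4, h2]
    have : ((h - 1 : ℕ) : ℂ) = (h : ℂ) - 1 := by
      rw [Nat.cast_sub hhpos]; simp
    rw [this]; ring
  -- product over multiples of 5 (nonzero)
  have hβ5 : IsPrimitiveRoot (β ^ 5) h' := hβ.pow hhpos hh
  have hmult : ∏ r ∈ (Finset.range h).filter (fun r => 5 ∣ r ∧ r ≠ 0), (1 - β ^ r)
      = (h' : ℂ) := by
    have hfull' : ∏ t ∈ (Finset.range h').filter (fun t => t ≠ 0), (1 - (β ^ 5) ^ t)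
        = (h' : ℂ) := by
      have h1 : IsPrimitiveRoot (β ^ 5) ((h' - 1) + 1) := by rwa [Nat.sub_add_cancel hh']
      have h2 := IsPrimitiveRoot.prod_one_sub_pow_eq_order h1
      have h3 : (Finset.range h').filter (fun r => r ≠ 0) = (Finset.Ico 1 h') := by
        ext x; simp [Finset.mem_filter, Finset.mem_range, Finset.mem_Ico]; omega
      rw [h3, Finset.prod_Ico_eq_prod_range]
      have h4 : ∀ i ∈ Finset.range (h' - 1), (1 - (β ^ 5) ^ (1 + i)) = (1 - (β ^ 5) ^ (i + 1)) := by
        intro i _; rw [add_comm]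
      rw [Finset.prod_congr rfl h4, h2]
      have : ((h' - 1 : ℕ) : ℂ) = (h' : ℂ) - 1 := by
        rw [Nat.cast_sub hh']; simp
      rw [this]; ring
    rw [← hfull']
    refine Finset.prod_bij' (fun r (_ : r ∈ _) => r / 5) (fun t _ => 5 * t) ?_ ?_ ?_ ?_ ?_
    · intro r hr
      simp only [Finset.mem_filter, Finset.mem_range] at hr ⊢
      omega
    · intro t ht
      simp only [Finset.mem_filter, Finset.mem_range] at ht ⊢
      omega
    · intro r hr
      simp only [Finset.mem_filter, Finset.mem_range] at hr
      omega
    · intro t ht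
      simp only [Finset.mem_filter, Finset.mem_range] at ht
      omega
    · intro r hr
      simp only [Finset.mem_filter, Finset.mem_range] at hr
      rw [← pow_mul]
      congr 2
      omega
  -- split
  have hsplit : ((Finset.range h).filter (fun r => r ≠ 0)) =
      ((Finset.range h).filter (fun r => ¬ (5 ∣ r))) ∪
      ((Finset.range h).filter (fun r => 5 ∣ r ∧ r ≠ 0)) := by
    ext x
    simp only [Finset.mem_filter, Finset.mem_union, Finset.mem_range]
    constructor
    · rintro ⟨hx, hx0⟩
      by_cases h5 : 5 ∣ x
      · exact Or.inr ⟨hx, h5, hx0⟩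
      · exact Or.inl ⟨hx, h5⟩
    · rintro (⟨hx, h5⟩ | ⟨hx, h5, hx0⟩)
      · exact ⟨hx, by rintro rfl; exact h5 ⟨0, rfl⟩⟩
      · exact ⟨hx, hx0⟩
  have hdisj : Disjoint ((Finset.range h).filter (fun r => ¬ (5 ∣ r)))
      ((Finset.range h).filter (fun r => 5 ∣ r ∧ r ≠ 0)) := by
    rw [Finset.disjoint_left]
    intro a ha hb
    simp only [Finset.mem_filter] at ha hb
    exact ha.2 hb.2.1
  rw [hsplit, Finset.prod_union hdisj, hmult] at hfull
  have hne : (h' : ℂ) ≠ 0 := Nat.cast_ne_zero.mpr hh'.ne'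
  have hcast : (h : ℂ) = 5 * (h' : ℂ) := by rw [hh]; push_cast; ring
  rw [hcast] at hfull
  exact mul_right_cancel₀ hne hfull

/-- Main evaluation: the product over {x < N, 5∤x} of (1 - (ω^d)^x). -/
lemma eval_prod_form (m : ℕ) (hm : 0 < m) (ω : ℂ) (hω : IsPrimitiveRoot ω (5 * m)) (d : ℕ) :
    ∏ x ∈ (Finset.range (5 * m)).filter (fun x => ¬ (5 ∣ x)), (1 - (ω ^ d) ^ x) =
      if Nat.gcd d (5 * m) ∣ m then (5 : ℂ) ^ Nat.gcd d (5 * m) else 0 := by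
  set N := 5 * m with hN
  have hNpos : 0 < N := by omega
  set g := Nat.gcd d N with hg
  have hgpos : 0 < g := Nat.gcd_pos_of_pos_right d hNpos
  have hgN : g ∣ N := Nat.gcd_dvd_right d N
  have hgd : g ∣ d := Nat.gcd_dvd_left d N
  by_cases hcase : g ∣ m
  · rw [if_pos hcase]
    -- setup
    set h := N / g with hh
    have hgh : g * h = N := Nat.mul_div_cancel' hgN
    obtain ⟨h', hmg⟩ := hcase  -- m = g * h'
    have hh5 : h = 5 * h' := by
      have : g * h = g * (5 * h') := by rw [hgh, hN, hmg]; ring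
      exact Nat.eq_of_mul_eq_mul_left hgpos this
    have hh'pos : 0 < h' := by
      rcases Nat.eq_zero_or_pos h' with h0 | h0
      · subst h0; omega
      · exact h0
    have hhpos : 0 < h := by omega
    -- β := ω ^ d is a primitive h-th root of unity
    have hβg : IsPrimitiveRoot (ω ^ g) h := hω.pow hNpos hgh.symm
    have hβ : IsPrimitiveRoot (ω ^ d) h := by
      have hco : (d / g).Coprime h := by
        have := Nat.coprime_div_gcd_div_gcd (m := d) (n := N) hgpos
        rwa [← hg, ← hh] at this
      have := hβg.pow_of_coprime (d / g) hco
      rwa [← pow_mul, Nat.mul_div_cancel' hgd] at this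
    have hβh : (ω ^ d) ^ h = 1 := hβ.pow_eq_one
    -- group the product by residues mod h
    have hgroup : ∏ x ∈ (Finset.range N).filter (fun x => ¬ (5 ∣ x)), (1 - (ω ^ d) ^ x) =
        ∏ p ∈ ((Finset.range h).filter (fun r => ¬ (5 ∣ r))) ×ˢ Finset.range g,
          (1 - (ω ^ d) ^ p.1) := by
      refine Finset.prod_bij' (fun x (_ : x ∈ _) => (x % h, x / h)) (fun p _ => p.1 + h * p.2)
        ?_ ?_ ?_ ?_ ?_
      · intro x hx
        simp only [Finset.mem_filter, Finset.mem_range, Finset.mem_product] at hx ⊢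
        have hx5 : x % h % 5 = x % 5 := Nat.mod_mod_of_dvd x ⟨h', hh5⟩
        refine ⟨⟨Nat.mod_lt x hhpos, ?_⟩, ?_⟩
        · intro hdvd
          rw [Nat.dvd_iff_mod_eq_zero] at hdvd
          rw [hx5] at hdvd
          exact hx.2 (Nat.dvd_of_mod_eq_zero hdvd)
        · have : x < g * h := by rw [hgh]; exact hx.1
          exact Nat.div_lt_iff_lt_mul hhpos |>.mpr (by omega)
      · intro p hp
        simp only [Finset.mem_filter, Finset.mem_range, Finset.mem_product] at hp ⊢
        obtain ⟨⟨hp1, hp5⟩, hp2⟩ := hp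
        constructor
        · have : h * p.2 + h ≤ h * g := by
            calc h * p.2 + h = h * (p.2 + 1) := by ring
            _ ≤ h * g := Nat.mul_le_mul_left h (by omega)
          have hhg : h * g = N := by rw [mul_comm]; exact hgh
          omega
        · intro hdvd
          apply hp5
          have : (p.1 + h * p.2) % 5 = p.1 % 5 := by
            rw [hh5]
            have : p.1 + 5 * h' * p.2 = p.1 + 5 * (h' * p.2) := by ring
            rw [this, Nat.add_mul_mod_self_left]
          rw [Nat.dvd_iff_mod_eq_zero] at hdvd ⊢
          omega
      · intro x hx
        simp only [Finset.mem_filter, Finset.mem_range] at hx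
        dsimp only
        have := Nat.div_add_mod x h
        omega
      · intro p hp
        simp only [Finset.mem_filter, Finset.mem_range, Finset.mem_product] at hp
        have e1 : (p.1 + h * p.2) % h = p.1 := by
          rw [Nat.add_mul_mod_self_left, Nat.mod_eq_of_lt hp.1.1]
        have e2 : (p.1 + h * p.2) / h = p.2 := by
          rw [Nat.add_mul_div_left _ _ hhpos, Nat.div_eq_of_lt hp.1.1, Nat.zero_add]
        rw [e1, e2]
      · intro x hx
        simp only [Finset.mem_filter, Finset.mem_range] at hx
        dsimp only
        congr 1
        conv_lhs => rw [← Nat.div_add_mod x h]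
        rw [pow_add, pow_mul, hβh, one_pow, one_mul]
    rw [hgroup, Finset.prod_product]
    simp only [Finset.prod_const, Finset.card_range]
    rw [Finset.prod_pow, prod_not_dvd_eq_five hh5 hh'pos hβ]
  · rw [if_neg hcase]
    have hg1 : 1 < g := by
      rcases Nat.lt_or_ge 1 g with h1 | h1
      · exact h1
      · exfalso
        have : g = 1 := by omega
        rw [this] at hcase
        exact hcase (one_dvd m)
    have hmul : g * (N / g) = N := Nat.mul_div_cancel' hgN
    apply Finset.prod_eq_zero (i := N / g)
    · simp only [Finset.mem_filter, Finset.mem_range]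
      constructor
      · exact Nat.div_lt_self hNpos hg1
      · rintro ⟨t, ht⟩
        apply hcase
        have h2 : g * (5 * t) = 5 * m := by rw [← ht, hmul]
        have h3 : 5 * (g * t) = 5 * m := by rw [← h2]; ring
        exact ⟨t, by omega⟩
    · have h1 : (ω ^ d) ^ (N / g) = 1 := by
        rw [← pow_mul]
        apply (hω.pow_eq_one_iff_dvd _).mpr
        obtain ⟨d', hd'⟩ := hgd
        refine ⟨d', ?_⟩
        rw [hd']
        conv_rhs => rw [← hmul]
        ring
      rw [h1, sub_self]

/-- geometric sum of root-of-unity powers -/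
lemma root_sum {N : ℕ} (hN : 0 < N) {ω : ℂ} (hω : IsPrimitiveRoot ω N) (k : ℕ) :
    ∑ d ∈ Finset.range N, ω ^ (k * d) = if N ∣ k then (N : ℂ) else 0 := by
  have hrw : ∀ d, ω ^ (k * d) = (ω ^ k) ^ d := fun d => by rw [pow_mul]
  simp only [hrw]
  by_cases h : N ∣ k
  · rw [if_pos h]
    have h1 : ω ^ k = 1 := (hω.pow_eq_one_iff_dvd k).mpr h
    simp [h1]
  · rw [if_neg h]
    have h1 : ω ^ k ≠ 1 := fun e => h ((hω.pow_eq_one_iff_dvd k).mp e)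
    rw [geom_sum_eq h1]
    have h2 : (ω ^ k) ^ N = 1 := by
      rw [← pow_mul, mul_comm, pow_mul, hω.pow_eq_one, one_pow]
    rw [h2, sub_self, zero_div]

/-- borweinM as a sum over a filtered range -/
lemma M_eq_filter (n b : ℕ) (hb : b < 5 * (n + 1)) :
    borweinM 5 1 n b = ∑ i ∈ (Finset.range (borweinDeg 5 1 n + 1)).filter
      (fun i => 5 * (n + 1) ∣ (5 * (n + 1) - b + i)), borweinCoeff 5 1 n i := by
  rw [borweinM]
  set N := 5 * (n + 1) with hN
  set D := borweinDeg 5 1 n with hD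
  have hNpos : 0 < N := by omega
  rw [← Finset.sum_filter_of_ne (p := fun l => b + l * N ≤ D)
    (fun l _ hne => by
      by_contra hgt
      apply hne
      unfold borweinCoeff
      exact Polynomial.coeff_eq_zero_of_natDegree_lt
        (lt_of_le_of_lt (bp_natDegree_le n) (by omega)))]
  refine Finset.sum_bij' (fun l (_ : l ∈ _) => b + l * N) (fun i _ => (i - b) / N) ?_ ?_ ?_ ?_ ?_
  · intro l hl
    simp only [Finset.mem_filter, Finset.mem_range] at hl ⊢
    refine ⟨by omega, ?_⟩
    have h1 : N - b + (b + l * N) = N * (1 + l) := by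
      have e : N * (1 + l) = N + l * N := by ring
      rw [e]
      omega
    rw [h1]
    exact ⟨1 + l, rfl⟩
  · intro i hi
    simp only [Finset.mem_filter, Finset.mem_range] at hi ⊢
    obtain ⟨hiD, hdvd⟩ := hi
    have hbi : b ≤ i := by
      by_contra hlt
      have h1 : 0 < N - b + i := by omega
      have h2 : N - b + i < N := by omega
      exact absurd (Nat.le_of_dvd h1 hdvd) (by omega)
    have hdvd2 : N ∣ (i - b) := by
      have h1 : N - b + i = N + (i - b) := by omega
      rw [h1] at hdvd
      exact (Nat.dvd_add_right ⟨1, (mul_one N).symm⟩).mp hdvd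
    have h3 : (i - b) / N * N = i - b := Nat.div_mul_cancel hdvd2
    constructor
    · have := Nat.div_le_self (i - b) N
      omega
    · omega
  · intro l hl
    simp only [Finset.mem_filter, Finset.mem_range] at hl
    rw [Nat.add_sub_cancel_left, Nat.mul_div_cancel _ hNpos]
  · intro i hi
    simp only [Finset.mem_filter, Finset.mem_range] at hi
    obtain ⟨hiD, hdvd⟩ := hi
    have hbi : b ≤ i := by
      by_contra hlt
      have h1 : 0 < N - b + i := by omega
      have h2 : N - b + i < N := by omega
      exact absurd (Nat.le_of_dvd h1 hdvd) (by omega)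
    have hdvd2 : N ∣ (i - b) := by
      have h1 : N - b + i = N + (i - b) := by omega
      rw [h1] at hdvd
      exact (Nat.dvd_add_right ⟨1, (mul_one N).symm⟩).mp hdvd
    have h3 : (i - b) / N * N = i - b := Nat.div_mul_cancel hdvd2
    omega
  · intro l hl
    rfl

/-- the mapped polynomial over ℂ -/
noncomputable def Tc (n : ℕ) : Polynomial ℂ := (borweinPoly 5 1 n).map (Int.castRingHom ℂ)

lemma Tc_eval (n : ℕ) (m : ℕ) (hm : m = n + 1) (ω : ℂ) (hω : IsPrimitiveRoot ω (5 * m))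
    (d : ℕ) :
    (Tc n).eval (ω ^ d) =
      if Nat.gcd d (5 * m) ∣ m then (5 : ℂ) ^ Nat.gcd d (5 * m) else 0 := by
  subst hm
  rw [← eval_prod_form (n + 1) (by omega) ω hω d]
  rw [Tc, bp_prod_form]
  rw [Polynomial.map_prod]
  rw [Polynomial.eval_prod]
  apply Finset.prod_congr rfl
  intro x _
  simp

/-- The discrete-Fourier identity. -/
lemma dft_identity (n b : ℕ) (hb : b < 5 * (n + 1)) (ω : ℂ)
    (hω : IsPrimitiveRoot ω (5 * (n + 1))) :
    ((5 * (n + 1) : ℕ) : ℂ) * (borweinM 5 1 n b : ℂ) =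
      ∑ d ∈ Finset.range (5 * (n + 1)),
        ω ^ ((5 * (n + 1) - b) * d) * (Tc n).eval (ω ^ d) := by
  set N := 5 * (n + 1) with hN
  set D := borweinDeg 5 1 n with hD
  have hNpos : 0 < N := by omega
  have hdeg : (Tc n).natDegree < D + 1 := by
    have h1 : (Tc n).natDegree ≤ (borweinPoly 5 1 n).natDegree :=
      Polynomial.natDegree_map_le
    have := bp_natDegree_le n
    omega
  have heval : ∀ d : ℕ, (Tc n).eval (ω ^ d) =
      ∑ i ∈ Finset.range (D + 1), ((borweinCoeff 5 1 n i : ℂ)) * (ω ^ d) ^ i := by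
    intro d
    rw [Polynomial.eval_eq_sum_range' hdeg]
    apply Finset.sum_congr rfl
    intro i _
    congr 1
    rw [Tc, Polynomial.coeff_map]
    rfl
  have hstep : ∀ d ∈ Finset.range N, ω ^ ((N - b) * d) * (Tc n).eval (ω ^ d) =
      ∑ i ∈ Finset.range (D + 1),
        ω ^ ((N - b) * d) * ((borweinCoeff 5 1 n i : ℂ) * (ω ^ d) ^ i) := by
    intro d _
    rw [heval d, Finset.mul_sum]
  rw [Finset.sum_congr rfl hstep]
  rw [Finset.sum_comm]
  have hterm : ∀ i ∈ Finset.range (D + 1), ∀ d ∈ Finset.range N,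
      ω ^ ((N - b) * d) * ((borweinCoeff 5 1 n i : ℂ) * (ω ^ d) ^ i) =
      (borweinCoeff 5 1 n i : ℂ) * ω ^ (((N - b) + i) * d) := by
    intro i _ d _
    rw [← pow_mul]
    rw [show (N - b + i) * d = (N - b) * d + d * i by ring, pow_add]
    ring
  rw [Finset.sum_congr rfl (fun i hi => Finset.sum_congr rfl (fun d hd => hterm i hi d hd))]
  have hinner : ∀ i ∈ Finset.range (D + 1),
      ∑ d ∈ Finset.range N, (borweinCoeff 5 1 n i : ℂ) * ω ^ (((N - b) + i) * d) =
      (borweinCoeff 5 1 n i : ℂ) * (if N ∣ (N - b + i) then (N : ℂ) else 0) := by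
    intro i _
    rw [← Finset.mul_sum, root_sum hNpos hω]
  rw [Finset.sum_congr rfl hinner]
  rw [M_eq_filter n b hb]
  push_cast
  rw [Finset.sum_filter]
  rw [Finset.mul_sum]
  apply Finset.sum_congr rfl
  intro i _
  by_cases h : N ∣ (N - b + i)
  · rw [if_pos h, if_pos h]; ring
  · rw [if_neg h, if_neg h]; ring

theorem stmt_6 (n b : ℕ) (hn : 1 ≤ n) (hb : b < 5 * (n + 1)) (hdvd : 5 ∣ b) :
    0 < borweinM 5 1 n b := by
  set m := n + 1 with hm
  have hm2 : 2 ≤ m := by omega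
  set N := 5 * m with hN
  have hNpos : 0 < N := by omega
  -- the primitive root
  obtain ⟨ω, hω⟩ : ∃ ω : ℂ, IsPrimitiveRoot ω N :=
    ⟨Complex.exp (2 * Real.pi * Complex.I / N), Complex.isPrimitiveRoot_exp N (by omega)⟩
  have habsω : ‖ω‖ = 1 := abs_eq_one_of_pow hNpos hω.pow_eq_one
  -- the key identity
  have key := dft_identity n b hb ω hω
  have key2 : ((N : ℕ) : ℂ) * (borweinM 5 1 n b : ℂ) =
      ∑ d ∈ Finset.range N,
        ω ^ ((N - b) * d) * (if Nat.gcd d N ∣ m then (5 : ℂ) ^ Nat.gcd d N else 0) := by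
    rw [key]
    exact Finset.sum_congr rfl (fun d _ => by rw [Tc_eval n m hm ω hω d])
  -- take real parts
  set F : ℕ → ℝ := fun d =>
    (ω ^ ((N - b) * d) * (if Nat.gcd d N ∣ m then (5 : ℂ) ^ Nat.gcd d N else 0)).re with hF
  have hre : (N : ℝ) * (borweinM 5 1 n b : ℝ) = ∑ d ∈ Finset.range N, F d := by
    have h1 := congrArg Complex.re key2
    rwa [Complex.re_sum, show ((N : ℕ) : ℂ) * (borweinM 5 1 n b : ℂ) =
      (((N : ℝ) * (borweinM 5 1 n b : ℝ) : ℝ) : ℂ) by push_cast; ring,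
      Complex.ofReal_re] at h1
  -- the special set
  set Sp : Finset ℕ := {m, 2 * m, 3 * m, 4 * m} with hSp
  have hSp_sub : Sp ⊆ Finset.range N := by
    intro d hd
    simp only [hSp, Finset.mem_insert, Finset.mem_singleton] at hd
    simp only [Finset.mem_range]
    omega
  have hSp_card : Sp.card = 4 := by
    simp only [hSp]
    rw [Finset.card_insert_of_notMem (by
          simp only [Finset.mem_insert, Finset.mem_singleton]; omega),
        Finset.card_insert_of_notMem (by
          simp only [Finset.mem_insert, Finset.mem_singleton]; omega),
        Finset.card_insert_of_notMem (by simp only [Finset.mem_singleton]; omega),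
        Finset.card_singleton]
  -- value on special set
  have hSp_val : ∀ d ∈ Sp, F d = (5 : ℝ) ^ m := by
    intro d hd
    simp only [hSp, Finset.mem_insert, Finset.mem_singleton] at hd
    obtain ⟨c, rfl⟩ := hdvd
    have hcm : c ≤ m := by omega
    -- d = k * m for some k ∈ {1,2,3,4}
    obtain ⟨k, hk15, rfl⟩ : ∃ k, (1 ≤ k ∧ k ≤ 4) ∧ d = k * m := by
      rcases hd with rfl | rfl | rfl | rfl
      · exact ⟨1, ⟨le_refl 1, by norm_num⟩, by ring⟩
      · exact ⟨2, ⟨by norm_num, by norm_num⟩, by ring⟩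
      · exact ⟨3, ⟨by norm_num, by norm_num⟩, by ring⟩
      · exact ⟨4, ⟨by norm_num, by norm_num⟩, by ring⟩
    have hgcd : Nat.gcd (k * m) N = m := by
      rw [hN, Nat.gcd_mul_right]
      obtain ⟨hk1, hk4⟩ := hk15
      have : Nat.gcd k 5 = 1 := by
        interval_cases k <;> norm_num
      rw [this, one_mul]
    have hpow1 : ω ^ ((N - 5 * c) * (k * m)) = 1 := by
      apply (hω.pow_eq_one_iff_dvd _).mpr
      refine ⟨(m - c) * k, ?_⟩
      have h1 : N - 5 * c = 5 * (m - c) := by omega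
      rw [h1, hN]
      ring
    rw [hF]
    simp only [hgcd, if_pos (dvd_refl m), hpow1, one_mul]
    rw [show ((5 : ℂ) ^ m) = (((5 : ℝ) ^ m : ℝ) : ℂ) by push_cast; ring, Complex.ofReal_re]
  -- bound on the rest
  have hrest : ∀ d ∈ Finset.range N \ Sp, -((5 : ℝ) ^ (m / 2)) ≤ F d := by
    intro d hd
    simp only [Finset.mem_sdiff, Finset.mem_range] at hd
    obtain ⟨hdN, hdSp⟩ := hd
    set g := Nat.gcd d N with hg
    have habs : ‖(ω ^ ((N - b) * d) *
        (if g ∣ m then (5 : ℂ) ^ g else 0))‖ ≤ (5 : ℝ) ^ (m / 2) := by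
      rw [norm_mul, norm_pow, habsω, one_pow, one_mul]
      by_cases hdm : g ∣ m
      · rw [if_pos hdm]
        have hgm : g ≠ m := by
          intro hgeq
          have hmd : m ∣ d := hgeq ▸ (hg ▸ Nat.gcd_dvd_left d N)
          obtain ⟨k, rfl⟩ := hmd
          have hk5 : k < 5 := by
            by_contra hk5
            push_neg at hk5
            have : 5 * m ≤ m * k := by
              calc 5 * m = m * 5 := by ring
              _ ≤ m * k := Nat.mul_le_mul_left m hk5
            omega
          rcases Nat.eq_zero_or_pos k with rfl | hkpos
          · rw [mul_zero, Nat.gcd_zero_left] at hg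
            omega
          · apply hdSp
            simp only [hSp, Finset.mem_insert, Finset.mem_singleton]
            interval_cases k
            · left; ring
            · right; left; ring
            · right; right; left; ring
            · right; right; right; ring
        have hgle : g ≤ m / 2 := by
          obtain ⟨t, ht⟩ := hdm
          have ht2 : 2 ≤ t := by
            rcases Nat.lt_or_ge t 2 with h2 | h2
            · interval_cases t
              · omega
              · exfalso; apply hgm; omega
            · exact h2
          have : g * 2 ≤ m := by
            calc g * 2 ≤ g * t := Nat.mul_le_mul_left g ht2
            _ = m := ht.symm
          omega
        rw [norm_pow]
        have h5 : ‖(5 : ℂ)‖ = 5 := by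
          rw [show (5 : ℂ) = ((5 : ℝ) : ℂ) by norm_num, Complex.norm_real]
          norm_num
        rw [h5]
        exact pow_le_pow_right₀ (by norm_num) hgle
      · rw [if_neg hdm, norm_zero]
        positivity
    calc -((5 : ℝ) ^ (m / 2)) ≤ -(‖(ω ^ ((N - b) * d) *
        (if g ∣ m then (5 : ℂ) ^ g else 0))‖) := by linarith
    _ ≤ F d := by
      have h1 := Complex.abs_re_le_norm (ω ^ ((N - b) * d) *
        (if g ∣ m then (5 : ℂ) ^ g else 0))
      have h2 := abs_le.mp h1
      exact h2.1
  -- assemble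
  have hsplit : ∑ d ∈ Finset.range N, F d =
      ∑ d ∈ Finset.range N \ Sp, F d + ∑ d ∈ Sp, F d :=
    (Finset.sum_sdiff hSp_sub).symm
  have hSp_sum : ∑ d ∈ Sp, F d = 4 * (5 : ℝ) ^ m := by
    rw [Finset.sum_congr rfl hSp_val, Finset.sum_const, hSp_card]
    simp [nsmul_eq_mul]
  have hrest_sum : -(((N : ℕ) : ℝ) * (5 : ℝ) ^ (m / 2)) ≤ ∑ d ∈ Finset.range N \ Sp, F d := by
    have h1 : ∑ d ∈ Finset.range N \ Sp, (-((5 : ℝ) ^ (m / 2))) ≤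
        ∑ d ∈ Finset.range N \ Sp, F d := Finset.sum_le_sum hrest
    rw [Finset.sum_const, nsmul_eq_mul] at h1
    have hcard : ((Finset.range N \ Sp).card : ℝ) ≤ (N : ℝ) := by
      have := Finset.card_le_card (Finset.sdiff_subset (s := Finset.range N) (t := Sp))
      rw [Finset.card_range] at this
      exact_mod_cast this
    have h2 : -((N : ℝ) * (5 : ℝ) ^ (m / 2)) ≤
        ((Finset.range N \ Sp).card : ℝ) * (-((5 : ℝ) ^ (m / 2))) := by
      rw [mul_neg, neg_le_neg_iff]
      apply mul_le_mul_of_nonneg_right hcard (by positivity)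
    linarith
  have hineq : (5 : ℝ) * m * 5 ^ (m / 2) < 4 * 5 ^ m := by exact_mod_cast nat_ineq m hm2
  have hfinal : 0 < (N : ℝ) * (borweinM 5 1 n b : ℝ) := by
    rw [hre, hsplit, hSp_sum]
    have hNr : ((N : ℕ) : ℝ) = 5 * (m : ℝ) := by rw [hN]; push_cast; ring
    rw [hNr] at hrest_sum
    linarith
  have hMpos : (0 : ℝ) < (borweinM 5 1 n b : ℝ) := by
    by_contra hle
    push_neg at hle
    have : (N : ℝ) * (borweinM 5 1 n b : ℝ) ≤ 0 :=
      mul_nonpos_of_nonneg_of_nonpos (by positivity) hle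
    linarith
  exact_mod_cast hMpos
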